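/- Let D be an n×n symmetric hollow matrix and Q the Householder reflector from v = (1,...,1,1+√n)^T with QDQ = [[D̂, f],[f^T, ξ]]. Then D is a Euclidean distance matrix realizable in dimension at most r if and only if D̂ is negative semi-definite with rank at most r. -/

import Mathlib

open Matrix

section Aux


lemma psd_factor_rank {m r : ℕ} (A : Matrix (Fin m) (Fin m) ℝ)
    (hA : A.PosSemidef) (hr : A.rank ≤ r) :
    ∃ B : Matrix (Fin r) (Fin m) ℝ, A = Bᵀ * B := by
  classical
  have hH := hA.1
  have hcard : Fintype.card {i // hH.eigenvalues i ≠ 0} ≤ Fintype.card (Fin r) := by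
    rw [Fintype.card_fin, ← hH.rank_eq_card_non_zero_eigs]; exact hr
  obtain ⟨f⟩ := Function.Embedding.nonempty_of_card_le hcard
  set U : Matrix (Fin m) (Fin m) ℝ := (hH.eigenvectorUnitary : Matrix (Fin m) (Fin m) ℝ) with hU
  set lam := hH.eigenvalues with hlam
  refine ⟨Matrix.of fun k i =>
    Function.extend f (fun j => Real.sqrt (lam j.1) * U i j.1) (fun _ => 0) k, ?_⟩
  ext i i'
  have hAii : A i i' = ∑ j, lam j * (U i j * U i' j) := by
    conv_lhs => rw [hH.spectral_theorem, Unitary.conjStarAlgAut_apply]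
    simp only [← hU, ← hlam, Matrix.mul_apply, Matrix.diagonal_apply, Function.comp_apply,
      RCLike.ofReal_real_eq_id, id_eq, star_apply, star_trivial, Finset.sum_mul, ite_mul, zero_mul]
    rw [Finset.sum_comm]
    apply Finset.sum_congr rfl
    intro j _
    rw [Finset.sum_eq_single j]
    · simp; ring
    · intro b _ hb; simp [Ne.symm hb]
    · simp
  rw [hAii, Matrix.mul_apply]
  -- RHS: sum over k : Fin r of extend ... * extend ...
  have hsplit : ∀ g : Fin r → ℝ, (∀ k, (¬ ∃ j, f j = k) → g k = 0) →
      ∑ k, g k = ∑ j : {i // lam i ≠ 0}, g (f j) := by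
    intro g hg
    rw [← Finset.sum_map Finset.univ f g]
    apply (Finset.sum_subset (Finset.subset_univ _) _).symm
    intro k _ hk
    apply hg
    intro ⟨j, hj⟩
    exact hk (Finset.mem_map.2 ⟨j, Finset.mem_univ _, hj⟩)
  rw [hsplit _ ?vanish]
  case vanish =>
    intro k hk
    simp [Matrix.transpose_apply, Function.extend_apply' _ _ _ hk]
  · -- now sum over subtype
    rw [Finset.sum_congr rfl (g := fun j : {i // lam i ≠ 0} => lam j.1 * (U i j.1 * U i' j.1)) ?step]
    case step =>
      intro j _
      simp only [Matrix.of_apply, Matrix.transpose_apply, f.injective.extend_apply]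
      rw [show Real.sqrt (lam j.1) * U i j.1 * (Real.sqrt (lam j.1) * U i' j.1)
          = (Real.sqrt (lam j.1) * Real.sqrt (lam j.1)) * (U i j.1 * U i' j.1) from by ring,
        Real.mul_self_sqrt (hA.eigenvalues_nonneg j.1)]
    · rw [← Finset.sum_subtype (s := Finset.univ.filter (fun j => lam j ≠ 0))
          (by simp) (fun j => lam j * (U i j * U i' j))]
      symm
      apply Finset.sum_subset (Finset.subset_univ _)
      intro j _ hj
      simp only [Finset.mem_filter, Finset.mem_univ, true_and, not_not] at hj
      rw [hj, zero_mul]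

lemma sum_factor {m p : ℕ} (u w : Fin m → ℝ) (X : Fin m → Fin p → ℝ) :
    ∑ a, u a * ∑ b, w b * (∑ k, X a k * X b k)
      = ∑ k, (∑ a, u a * X a k) * (∑ b, w b * X b k) := by
  calc ∑ a, u a * ∑ b, w b * (∑ k, X a k * X b k)
      = ∑ a, ∑ b, ∑ k, (u a * X a k) * (w b * X b k) := by
        apply Finset.sum_congr rfl; intro a _
        rw [Finset.mul_sum]
        apply Finset.sum_congr rfl; intro b _
        rw [Finset.mul_sum Finset.univ (fun k => X a k * X b k) (w b), Finset.mul_sum]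
        apply Finset.sum_congr rfl; intro k _; ring
    _ = ∑ a, ∑ k, ∑ b, (u a * X a k) * (w b * X b k) :=
        Finset.sum_congr rfl fun a _ => Finset.sum_comm
    _ = ∑ k, ∑ a, ∑ b, (u a * X a k) * (w b * X b k) := Finset.sum_comm
    _ = ∑ k, (∑ a, u a * X a k) * (∑ b, w b * X b k) := by
        apply Finset.sum_congr rfl; intro k _
        rw [Finset.sum_mul]
        apply Finset.sum_congr rfl; intro a _
        rw [Finset.mul_sum]

lemma key_sum {m p : ℕ} (u w : Fin m → ℝ) (X : Fin m → Fin p → ℝ)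
    (hu : ∑ a, u a = 0) (hw : ∑ a, w a = 0) :
    ∑ a, ∑ b, u a * w b * (∑ k, (X a k - X b k) ^ 2)
      = -2 * ∑ k, (∑ a, u a * X a k) * (∑ b, w b * X b k) := by
  have hsq : ∀ a b, ∑ k, (X a k - X b k) ^ 2
      = (∑ k, X a k ^ 2) + (∑ k, X b k ^ 2) - 2 * ∑ k, X a k * X b k := by
    intro a b
    simp only [sub_sq]
    rw [Finset.sum_add_distrib, Finset.sum_sub_distrib, Finset.mul_sum]
    ring_nf
  set P : Fin m → ℝ := fun a => ∑ k, X a k ^ 2 with hP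
  set S : Fin m → Fin m → ℝ := fun a b => ∑ k, X a k * X b k with hS
  calc ∑ a, ∑ b, u a * w b * (∑ k, (X a k - X b k) ^ 2)
      = ∑ a, (u a * P a * (∑ b, w b) + u a * (∑ b, w b * P b)
          - 2 * (u a * (∑ b, w b * S a b))) := by
        apply Finset.sum_congr rfl; intro a _
        rw [Finset.mul_sum Finset.univ (fun b => w b) (u a * P a),
          Finset.mul_sum Finset.univ (fun b => w b * P b) (u a),
          Finset.mul_sum Finset.univ (fun b => w b * S a b) (u a),
          Finset.mul_sum Finset.univ (fun b => u a * (w b * S a b)) 2,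
          ← Finset.sum_add_distrib, ← Finset.sum_sub_distrib]
        apply Finset.sum_congr rfl; intro b _
        rw [hsq a b]; ring
    _ = (∑ a, u a) * (∑ b, w b * P b) - 2 * ∑ a, u a * (∑ b, w b * S a b) := by
        rw [Finset.sum_sub_distrib, Finset.sum_add_distrib, hw]
        simp only [mul_zero, zero_mul, Finset.sum_const_zero, zero_add]
        rw [← Finset.sum_mul, ← Finset.mul_sum]
    _ = -2 * ∑ k, (∑ a, u a * X a k) * (∑ b, w b * X b k) := by
        rw [hu, zero_mul, zero_sub, sum_factor u w X]
        ring

lemma sum_sq_sub {p : ℕ} (f g : Fin p → ℝ) :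
    ∑ k, (f k - g k) ^ 2 = (∑ k, f k * f k) + (∑ k, g k * g k) - 2 * ∑ k, f k * g k := by
  have h : ∀ k, (f k - g k) ^ 2 = (f k * f k + g k * g k) - 2 * (f k * g k) := fun k => by ring
  rw [Finset.sum_congr rfl fun k _ => h k, Finset.sum_sub_distrib, Finset.sum_add_distrib,
    ← Finset.mul_sum]

lemma posSemidef_smul' {m : ℕ} {M : Matrix (Fin m) (Fin m) ℝ} (hM : M.PosSemidef)
    {c : ℝ} (hc : 0 ≤ c) : (c • M).PosSemidef := by
  refine ⟨?_, fun x => ?_⟩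
  · unfold Matrix.IsHermitian
    rw [conjTranspose_smul, hM.1]
    simp
  · simpa [Finsupp.mul_sum, mul_assoc, mul_left_comm] using mul_nonneg hc (hM.2 x)

lemma euclid_norm_sub_sq {r : ℕ} (y z : EuclideanSpace ℝ (Fin r)) :
    ‖y - z‖ ^ 2 = ∑ k, (y k - z k) ^ 2 := by
  rw [EuclideanSpace.norm_eq, Real.sq_sqrt (by positivity)]
  apply Finset.sum_congr rfl
  intro k _
  rw [PiLp.sub_apply, Real.norm_eq_abs, sq_abs]

end Aux

theorem edm_dim_r_iff_block_negSemidef (n r : ℕ) (D : Matrix (Fin (n + 1)) (Fin (n + 1)) ℝ)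
    (hsymm : D.IsSymm) (hhollow : ∀ i, D i i = 0) :
    let v : Fin (n + 1) → ℝ := fun i => if i = Fin.last n then 1 + Real.sqrt (n + 1) else 1
    let Q : Matrix (Fin (n + 1)) (Fin (n + 1)) ℝ := 1 - (2 / (v ⬝ᵥ v)) • vecMulVec v v
    let Dhat : Matrix (Fin n) (Fin n) ℝ :=
      Matrix.of fun i j => (Q * D * Q) i.castSucc j.castSucc
    ((∃ x : Fin (n + 1) → EuclideanSpace ℝ (Fin r), ∀ i j, D i j = ‖x i - x j‖ ^ 2) ↔
      ((-Dhat).PosSemidef ∧ Dhat.rank ≤ r)) := by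
  intro v Q Dhat
  have hD : ∀ a b : Fin (n + 1), D a b = D b a := fun a b => by
    conv_lhs => rw [← hsymm]
    rfl
  set s : ℝ := Real.sqrt (n + 1) with hsdef
  have hs2 : s ^ 2 = (n : ℝ) + 1 := by
    rw [hsdef]; rw [Real.sq_sqrt (by positivity)]
  have hs0 : 0 < s := by
    rw [hsdef]; positivity
  have hvlast : v (Fin.last n) = 1 + s := by simp [v, hsdef]
  have hvcast : ∀ i : Fin n, v i.castSucc = 1 := by
    intro i; simp only [v]; rw [if_neg (Fin.castSucc_lt_last i).ne]
  have hn : (n : ℝ) = s ^ 2 - 1 := by rw [hs2]; ring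
  have hsumv : ∑ a, v a = s ^ 2 + s := by
    rw [Fin.sum_univ_castSucc, hvlast]
    simp only [hvcast]
    rw [Finset.sum_const, Finset.card_univ, Fintype.card_fin, nsmul_eq_mul, hn]
    ring
  have hvv : v ⬝ᵥ v = 2 * (s ^ 2 + s) := by
    unfold dotProduct
    rw [Fin.sum_univ_castSucc, hvlast]
    simp only [hvcast]
    rw [Finset.sum_const, Finset.card_univ, Fintype.card_fin, nsmul_eq_mul, hn]
    ring
  have hvvne : v ⬝ᵥ v ≠ 0 := by rw [hvv]; positivity
  have hQ : ∀ a b, Q a b = (if a = b then 1 else 0) - 2 / (v ⬝ᵥ v) * (v a * v b) := by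
    intro a b
    simp only [Q, Matrix.sub_apply, Matrix.one_apply, Matrix.smul_apply, vecMulVec_apply,
      smul_eq_mul]
  have hQsym : ∀ a b, Q a b = Q b a := by
    intro a b; rw [hQ, hQ]
    congr 1
    · simp [eq_comm]
    · ring
  have hQcolsum : ∀ b, ∑ a, Q a b = 1 - v b := by
    intro b
    simp only [hQ]
    rw [Finset.sum_sub_distrib]
    congr 1
    · simp
    · calc ∑ a, 2 / (v ⬝ᵥ v) * (v a * v b) = (∑ a, v a) * (2 / (v ⬝ᵥ v) * v b) := by
            rw [Finset.sum_mul]; exact Finset.sum_congr rfl fun a _ => by ring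
        _ = v b := by
            rw [hsumv, hvv]; field_simp
  have hQv : ∀ i : Fin n, ∑ a, Q a i.castSucc = 0 := by
    intro i; rw [hQcolsum, hvcast]; ring
  have hQQ : ∀ a b, (Q * Q) a b = if a = b then 1 else 0 := by
    intro a b
    rw [Matrix.mul_apply]
    have expand : ∀ c, Q a c * Q c b =
        ((if a = c then 1 else 0) * (if c = b then 1 else 0)
          - (if a = c then 1 else 0) * (2 / (v ⬝ᵥ v) * (v c * v b))
          - (2 / (v ⬝ᵥ v) * (v a * v c)) * (if c = b then 1 else 0))
          + (2 / (v ⬝ᵥ v) * (2 / (v ⬝ᵥ v)) * (v a * v b)) * (v c * v c) := by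
      intro c; rw [hQ, hQ]; ring
    rw [Finset.sum_congr rfl fun c _ => expand c, Finset.sum_add_distrib, ← Finset.mul_sum]
    have : ∑ c, v c * v c = v ⬝ᵥ v := rfl
    rw [this]
    rw [Finset.sum_sub_distrib, Finset.sum_sub_distrib]
    simp only [ite_mul, mul_ite, one_mul, mul_one, zero_mul, mul_zero,
      Finset.sum_ite_eq, Finset.sum_ite_eq', Finset.mem_univ, if_true]
    field_simp
    split <;> ring
  have hQlast : ∀ a, Q a (Fin.last n) = -s⁻¹ := by
    intro a
    rw [hQ, hvlast, hvv]
    by_cases ha : a = Fin.last n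
    · subst ha
      rw [if_pos rfl, hvlast]
      rw [show (2 : ℝ) * (s ^ 2 + s) = 2 * s * (s + 1) from by ring]
      field_simp
      ring
    · rw [if_neg ha]
      have hva : v a = 1 := by
        rcases Fin.exists_castSucc_eq.2 ha with ⟨i, rfl⟩
        exact hvcast i
      rw [hva]
      rw [show (2 : ℝ) * (s ^ 2 + s) = 2 * s * (s + 1) from by ring]
      field_simp
      ring
  -- the padded matrix machinery
  set N : ℝ := (n : ℝ) + 1 with hN
  have hNne : N ≠ 0 := by rw [hN]; positivity
  set F : Matrix (Fin (n + 1)) (Fin (n + 1)) ℝ :=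
    Matrix.diagonal (fun a => if a = Fin.last n then 0 else 1) with hF
  set J : Matrix (Fin (n + 1)) (Fin (n + 1)) ℝ := 1 - N⁻¹ • vecMulVec 1 1 with hJ
  set P : Matrix (Fin (n + 1)) (Fin n) ℝ :=
    Matrix.of (fun a i => if a = i.castSucc then 1 else 0) with hP
  have hQFQ : Q * F * Q = J := by
    ext a b
    have hstep : ∀ c, (Q * F) a c * Q c b
        = Q a c * Q c b - (if c = Fin.last n then Q a c * Q c b else 0) := by
      intro c
      rw [Matrix.mul_diagonal]
      by_cases hc : c = Fin.last n
      · rw [if_pos hc, if_pos hc]; ring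
      · rw [if_neg hc, if_neg hc]; ring
    rw [Matrix.mul_apply, Finset.sum_congr rfl fun c _ => hstep c, Finset.sum_sub_distrib,
      ← Matrix.mul_apply, hQQ, Finset.sum_ite_eq' Finset.univ (Fin.last n)
        (fun c => Q a c * Q c b), if_pos (Finset.mem_univ _), hQlast, hQsym (Fin.last n) b,
      hQlast]
    have hJab : J a b = (if a = b then 1 else 0) - N⁻¹ := by
      simp [hJ, Matrix.sub_apply, Matrix.one_apply, Matrix.smul_apply, vecMulVec_apply]
    rw [hJab]
    have : -s⁻¹ * -s⁻¹ = N⁻¹ := by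
      rw [← hs2, neg_mul_neg, ← mul_inv, ← pow_two]
    rw [this]
  have hMpad : P * Dhat * Pᵀ = F * (Q * D * Q) * F := by
    ext a b
    have hRHS : (F * (Q * D * Q) * F) a b
        = (if a = Fin.last n then 0 else 1) * (Q * D * Q) a b
          * (if b = Fin.last n then 0 else 1) := by
      rw [Matrix.mul_diagonal, Matrix.diagonal_mul]
    rw [hRHS]
    have hPD : ∀ j : Fin n, (P * Dhat) a j
        = (if a = Fin.last n then 0 else 1) * (Q * D * Q) a j.castSucc := by
      intro j
      rw [Matrix.mul_apply]
      refine Fin.lastCases ?_ (fun i0 => ?_) a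
      · rw [if_pos rfl, zero_mul]
        apply Finset.sum_eq_zero
        intro i _
        rw [show P (Fin.last n) i = 0 from if_neg (Fin.castSucc_lt_last i).ne', zero_mul]
      · rw [if_neg (Fin.castSucc_lt_last i0).ne, one_mul]
        rw [Finset.sum_eq_single i0]
        · rw [show P i0.castSucc i0 = 1 from if_pos rfl, one_mul]
          rfl
        · intro i _ hi
          rw [show P i0.castSucc i = 0 from if_neg (by
            intro h; exact hi (Fin.castSucc_injective n h.symm)), zero_mul]
        · intro h; exact absurd (Finset.mem_univ i0) h
    rw [Matrix.mul_apply]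
    refine Fin.lastCases ?_ (fun j0 => ?_) b
    · rw [if_pos rfl, mul_zero]
      apply Finset.sum_eq_zero
      intro j _
      rw [show Pᵀ j (Fin.last n) = 0 from if_neg (Fin.castSucc_lt_last j).ne', mul_zero]
    · rw [if_neg (Fin.castSucc_lt_last j0).ne, mul_one]
      rw [Finset.sum_eq_single j0]
      · rw [show Pᵀ j0 j0.castSucc = 1 from if_pos rfl, mul_one, hPD]
      · intro j _ hj
        rw [show Pᵀ j j0.castSucc = 0 from if_neg (by
          intro h; exact hj (Fin.castSucc_injective n h.symm)), mul_zero]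
      · intro h; exact absurd (Finset.mem_univ j0) h
  have hJDJ : (Q * P) * Dhat * (Pᵀ * Q) = J * D * J := by
    calc (Q * P) * Dhat * (Pᵀ * Q) = Q * (P * Dhat * Pᵀ) * Q := by
          simp only [Matrix.mul_assoc]
    _ = Q * (F * (Q * D * Q) * F) * Q := by rw [hMpad]
    _ = (Q * F * Q) * D * (Q * F * Q) := by simp only [Matrix.mul_assoc]
    _ = J * D * J := by rw [hQFQ]
  have hJentry : ∀ i j, (J * D * J) i j
      = D i j - (∑ b, D i b) / N - (∑ a, D j a) / N + (∑ a, ∑ b, D a b) / N ^ 2 := by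
    have hJap : ∀ a b : Fin (n + 1), J a b = (if a = b then 1 else 0) - N⁻¹ := by
      intro a b
      simp [hJ, Matrix.sub_apply, Matrix.one_apply, Matrix.smul_apply, vecMulVec_apply]
    have hJD : ∀ i b, (J * D) i b = D i b - N⁻¹ * ∑ a, D a b := by
      intro i b
      rw [Matrix.mul_apply]
      have : ∀ a, J i a * D a b = (if i = a then D a b else 0) - N⁻¹ * D a b := by
        intro a; rw [hJap]; split <;> ring
      rw [Finset.sum_congr rfl fun a _ => this a, Finset.sum_sub_distrib, ← Finset.mul_sum,
        Finset.sum_ite_eq Finset.univ i (fun a => D a b), if_pos (Finset.mem_univ _)]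
    intro i j
    rw [Matrix.mul_apply]
    have : ∀ b, (J * D) i b * J b j
        = (if b = j then (J * D) i b else 0) - N⁻¹ * (J * D) i b := by
      intro b; rw [hJap]; split <;> ring
    rw [Finset.sum_congr rfl fun b _ => this b, Finset.sum_sub_distrib, ← Finset.mul_sum,
      Finset.sum_ite_eq' Finset.univ j (fun b => (J * D) i b), if_pos (Finset.mem_univ _),
      hJD]
    have hsum2 : ∑ b, (J * D) i b = ∑ b, D i b - N⁻¹ * ∑ a, ∑ b, D a b := by
      rw [Finset.sum_congr rfl fun b _ => hJD i b, Finset.sum_sub_distrib, ← Finset.mul_sum]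
      rw [Finset.sum_comm]
    rw [hsum2]
    have hcol : ∑ a, D a j = ∑ a, D j a := Finset.sum_congr rfl fun a _ => hD a j
    rw [hcol]
    field_simp
    ring
  constructor
  · -- forward direction
    rintro ⟨x, hx⟩
    have hDval : ∀ a b, D a b = ∑ k, (x a k - x b k) ^ 2 := fun a b => by
      rw [hx a b, euclid_norm_sub_sq]
    set B : Matrix (Fin r) (Fin n) ℝ :=
      Matrix.of (fun k i => ∑ a, Q a i.castSucc * x a k) with hB
    have hDhat : ∀ i j, Dhat i j = -2 * ∑ k, B k i * B k j := by
      intro i j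
      show (Q * D * Q) i.castSucc j.castSucc = _
      have step1 : (Q * D * Q) i.castSucc j.castSucc
          = ∑ a, ∑ b, Q a i.castSucc * Q b j.castSucc * (∑ k, (x a k - x b k) ^ 2) := by
        rw [Matrix.mul_apply]
        rw [Finset.sum_congr rfl fun b (_ : b ∈ Finset.univ) =>
          (by rw [Matrix.mul_apply, Finset.sum_mul] :
            (Q * D) i.castSucc b * Q b j.castSucc
              = ∑ a, Q i.castSucc a * D a b * Q b j.castSucc)]
        rw [Finset.sum_comm]
        apply Finset.sum_congr rfl; intro a _
        apply Finset.sum_congr rfl; intro b _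
        rw [hQsym i.castSucc a, hDval a b]
        ring
      rw [step1, key_sum _ _ _ (hQv i) (hQv j)]
      rfl
    constructor
    · have hfact : -Dhat = (Real.sqrt 2 • B)ᵀ * (Real.sqrt 2 • B) := by
        ext i j
        rw [Matrix.mul_apply, Matrix.neg_apply, hDhat]
        have : ∀ k, (Real.sqrt 2 • B)ᵀ i k * (Real.sqrt 2 • B) k j
            = 2 * (B k i * B k j) := by
          intro k
          rw [Matrix.transpose_apply, Matrix.smul_apply, Matrix.smul_apply, smul_eq_mul,
            smul_eq_mul, show Real.sqrt 2 * B k i * (Real.sqrt 2 * B k j)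
              = Real.sqrt 2 * Real.sqrt 2 * (B k i * B k j) from by ring,
            Real.mul_self_sqrt (by norm_num)]
        rw [Finset.sum_congr rfl fun k _ => this k, ← Finset.mul_sum]
        ring
      rw [hfact, ← conjTranspose_eq_transpose_of_trivial]
      exact posSemidef_conjTranspose_mul_self _
    · have hfact2 : Dhat = ((-2 : ℝ) • Bᵀ) * B := by
        ext i j
        rw [Matrix.mul_apply, hDhat, Finset.mul_sum]
        apply Finset.sum_congr rfl; intro k _
        rw [Matrix.smul_apply, Matrix.transpose_apply, smul_eq_mul]
        ring
      calc Dhat.rank = (((-2 : ℝ) • Bᵀ) * B).rank := by rw [← hfact2]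
        _ ≤ B.rank := Matrix.rank_mul_le_right _ _
        _ ≤ Fintype.card (Fin r) := Matrix.rank_le_card_height B
        _ = r := Fintype.card_fin r
  · -- reverse direction
    rintro ⟨hpsd, hrank⟩
    have hQT : Qᵀ = Q := by
      ext a b; rw [Matrix.transpose_apply]; exact hQsym b a
    set G : Matrix (Fin (n + 1)) (Fin (n + 1)) ℝ :=
      (-(2 : ℝ)⁻¹) • ((Q * P) * Dhat * (Pᵀ * Q)) with hG
    have hGform : G = (Q * P) * ((-(2 : ℝ)⁻¹) • Dhat) * (Pᵀ * Q) := by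
      rw [hG, Matrix.mul_smul, Matrix.smul_mul]
    have hPSDinner : ((-(2 : ℝ)⁻¹) • Dhat).PosSemidef := by
      have heq : (-(2 : ℝ)⁻¹) • Dhat = (2 : ℝ)⁻¹ • (-Dhat) := by
        rw [smul_neg, neg_smul]
      rw [heq]
      exact posSemidef_smul' hpsd (by norm_num)
    have hGpsd : G.PosSemidef := by
      have h2 := hPSDinner.mul_mul_conjTranspose_same (Q * P)
      rwa [show (Q * P)ᴴ = Pᵀ * Q from by
        rw [conjTranspose_eq_transpose_of_trivial, Matrix.transpose_mul, hQT], ← hGform] at h2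
    have hGrank : G.rank ≤ r := by
      rw [hGform, Matrix.mul_assoc]
      refine le_trans (Matrix.rank_mul_le_right _ _) (le_trans ?_ hrank)
      refine le_trans (Matrix.rank_mul_le_left _ _) ?_
      rw [show (-(2 : ℝ)⁻¹) • Dhat = ((-(2 : ℝ)⁻¹) • (1 : Matrix (Fin n) (Fin n) ℝ)) * Dhat from by
        rw [Matrix.smul_mul, one_mul]]
      exact Matrix.rank_mul_le_right _ _
    have hGentry : ∀ i j, G i j = -(2 : ℝ)⁻¹ * ((J * D * J) i j) := by
      intro i j
      rw [hG, ← hJDJ]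
      rw [Matrix.smul_apply, smul_eq_mul]
    have hGD : ∀ i j, G i i + G j j - 2 * G i j = D i j := by
      intro i j
      rw [hGentry, hGentry, hGentry, hJentry, hJentry, hJentry]
      have hRi : ∑ b, D j b = ∑ b, D b j := Finset.sum_congr rfl fun b _ => hD j b
      rw [hhollow i, hhollow j]
      have hij : ∑ a, D i a = ∑ b, D i b := rfl
      field_simp
      ring
    obtain ⟨B, hBfact⟩ := psd_factor_rank G hGpsd hGrank
    have hBij : ∀ i j, G i j = ∑ k, B k i * B k j := by
      intro i j
      rw [hBfact, Matrix.mul_apply]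
      apply Finset.sum_congr rfl; intro k _
      rw [Matrix.transpose_apply]
    refine ⟨fun i => (WithLp.toLp 2 (fun k => B k i) : EuclideanSpace ℝ (Fin r)), fun i j => ?_⟩
    rw [euclid_norm_sub_sq, ← hGD i j]
    show _ = ∑ k, (B k i - B k j) ^ 2
    rw [sum_sq_sub (fun k => B k i) (fun k => B k j), ← hBij i i, ← hBij j j, ← hBij i j]
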